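/- arXiv:1412.8083 — 2 statements merged into one kernel-verified Lean document; each statement's English description precedes it below -/
import Mathlib

section
/- For k ≥ 2, the maximum number of triangles in an n-vertex graph containing no cycle of length 2k+1 is at most 9(k-1)·ex(⌈n/3⌉, ⌈n/3⌉, C_{2k}). -/
/-- `G` contains no cycle of length `ℓ`. -/
def CycleFree {V : Type*} (G : SimpleGraph V) (ℓ : ℕ) : Prop :=
  ∀ (v : V) (c : G.Walk v v), c.IsCycle → c.length ≠ ℓ

/-- `t_ℓ(n)`: the maximum number of triangles of an `n`-vertex graph with no cycle of
length `ℓ`. -/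
noncomputable def triMax (n ℓ : ℕ) : ℕ :=
  sSup {m | ∃ G : SimpleGraph (Fin n), CycleFree G ℓ ∧ (G.cliqueSet 3).ncard = m}

/-- `ex(m, n, C_ℓ)`: the maximum number of edges of a bipartite graph with parts of
sizes `m` and `n` containing no cycle of length `ℓ`. -/
noncomputable def exBipCycle (m n ℓ : ℕ) : ℕ :=
  sSup {e | ∃ G : SimpleGraph (Fin m ⊕ Fin n),
    (∀ u v, G.Adj u v → u.isLeft ≠ v.isLeft) ∧ CycleFree G ℓ ∧ G.edgeSet.ncard = e}



open Finset

namespace GyLi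

variable {V : Type*} {G : SimpleGraph V}

lemma exists_walk_of_chain (G : SimpleGraph V) :
    ∀ (l : List V) (x : V), List.Chain G.Adj x l →
      ∃ p : G.Walk x ((x :: l).getLast (by simp)), p.support = x :: l := by
  intro l
  induction l with
  | nil => exact fun x _ => ⟨(SimpleGraph.Walk.nil.copy rfl (by simp)), by simp⟩
  | cons y l ih =>
      intro x hch
      rw [List.Chain, List.isChain_cons_cons] at hch
      obtain ⟨p, hp⟩ := ih y hch.2
      refine ⟨(SimpleGraph.Walk.cons hch.1 p).copy rfl
        (List.getLast_cons (List.cons_ne_nil y l)).symm, ?_⟩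
      simp [hp]

lemma edge_not_mem_path_edges {x y : V} (p : G.Walk x y) (hp : p.IsPath)
    (hlen : 2 ≤ p.length) : s(y, x) ∉ p.edges := by
  intro he
  cases p with
  | nil => simp at hlen
  | cons h q =>
    rw [SimpleGraph.Walk.edges_cons, List.mem_cons] at he
    rw [SimpleGraph.Walk.cons_isPath_iff] at hp
    rcases he with h1 | h2
    · rw [Sym2.eq_iff] at h1
      rcases h1 with ⟨-, h2'⟩ | ⟨h1, -⟩
      · exact h.ne h2'
      · subst h1
        have h0 : q.length = 0 := by
          cases q with
          | nil => rfl
          | cons h' r =>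
            rw [SimpleGraph.Walk.cons_isPath_iff] at hp
            exact absurd r.end_mem_support hp.1.2
        rw [SimpleGraph.Walk.length_cons] at hlen; omega
    · exact hp.2 (SimpleGraph.Walk.snd_mem_support_of_mem_edges q h2)

lemma exists_cycle_of_list (G : SimpleGraph V) (l : List V) (h3 : 3 ≤ l.length)
    (hnd : l.Nodup) (hch : l.Chain' G.Adj) (hne : l ≠ [])
    (hcl : G.Adj (l.getLast hne) (l.head hne)) :
    ∃ (v : V) (c : G.Walk v v), c.IsCycle ∧ c.length = l.length := by
  obtain ⟨x, l', rfl⟩ := List.exists_cons_of_ne_nil hne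
  rw [List.Chain', List.isChain_cons] at hch
  have hchain : List.Chain G.Adj x l' :=
    List.isChain_cons.mpr hch
  obtain ⟨p, hp⟩ := exists_walk_of_chain G l' x hchain
  have hpath : p.IsPath := by
    rw [SimpleGraph.Walk.isPath_def, hp]; exact hnd
  have hplen : p.length = l'.length := by
    have := SimpleGraph.Walk.length_support p
    rw [hp] at this; simpa using this.symm
  have hlen2 : 2 ≤ p.length := by simp at h3; omega
  have hhead : (x :: l').head (by simp) = x := rfl
  rw [hhead] at hcl
  refine ⟨_, SimpleGraph.Walk.cons hcl p, ?_, ?_⟩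
  · rw [SimpleGraph.Walk.cons_isCycle_iff]
    exact ⟨hpath, edge_not_mem_path_edges p hpath hlen2⟩
  · simp [SimpleGraph.Walk.length_cons, hplen]

lemma list_of_cycle {v : V} (c : G.Walk v v) (hc : c.IsCycle) :
    ∃ (l : List V) (hne : l ≠ []), l.length = c.length ∧ l.Nodup ∧ l.Chain' G.Adj ∧
      G.Adj (l.getLast hne) (l.head hne) ∧ (∀ x ∈ l, x ∈ c.support) := by
  obtain ⟨t, hsup⟩ : ∃ t, c.support = v :: t := ⟨c.support.tail, c.support_eq_cons⟩
  have hch : List.Chain' G.Adj c.support := c.isChain_adj_support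
  have hlen := c.length_support
  have h3 := hc.three_le_length
  have htne : t ≠ [] := by
    intro h; rw [h] at hsup; rw [hsup] at hlen
    simp only [List.length_cons, List.length_nil] at hlen; omega
  have htlast : t.getLast htne = v := by
    obtain ⟨a, t', rfl⟩ := List.exists_cons_of_ne_nil htne
    have h1 : c.support.getLast? = some v := by
      rw [List.getLast?_eq_getLast (by rw [hsup]; simp), SimpleGraph.Walk.getLast_support]
    rw [hsup, List.getLast?_cons_cons, List.getLast?_eq_getLast (by simp)] at h1
    simpa using h1
  have htnd : t.Nodup := by
    have := hc.support_nodup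
    rwa [hsup, List.tail_cons] at this
  have hdl : t.dropLast ++ [v] = t := by
    rw [← htlast]; exact List.dropLast_append_getLast htne
  refine ⟨v :: t.dropLast, by simp, ?_, ?_, ?_, ?_, ?_⟩
  · have h1 : t.dropLast.length = t.length - 1 := List.length_dropLast
    have h2 : c.support.length = t.length + 1 := by rw [hsup]; simp
    have h4 : t.length ≠ 0 := by
      intro h; exact htne (List.eq_nil_of_length_eq_zero h)
    simp only [List.length_cons]
    omega
  · rw [List.nodup_cons]
    constructor
    · intro hv
      have h5 := htnd
      rw [← hdl, List.nodup_append] at h5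
      exact h5.2.2 v hv v (by simp) rfl
    · exact htnd.sublist (List.dropLast_sublist t)
  · have heq : (v :: t.dropLast) ++ [v] = c.support := by
      rw [hsup, ← hdl]; simp
    exact hch.prefix ⟨[v], heq⟩
  · have hsplit : c.support = (v :: t.dropLast) ++ [v] := by rw [hsup, ← hdl]; simp
    rw [hsplit, List.Chain', List.isChain_append] at hch
    have := hch.2.2 ((v :: t.dropLast).getLast (by simp))
      (List.getLast?_eq_getLast (by simp)) v rfl
    simpa using this
  · intro x hx
    rw [hsup]
    rcases List.mem_cons.mp hx with h | h
    · simp [h]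
    · exact List.mem_cons_of_mem _ (List.mem_of_mem_dropLast h)





attribute [local instance] Classical.propDecidable

lemma card_odd_range (L : ℕ) :
    ((Finset.range L).filter (fun i => i % 2 = 1)).card = L / 2 := by
  induction L with
  | zero => simp
  | succ L ih =>
    rw [Finset.range_add_one, Finset.filter_insert]
    by_cases h : L % 2 = 1
    · rw [if_pos h, Finset.card_insert_of_notMem (by simp), ih]; omega
    · rw [if_neg h, ih]; omega

lemma chain_side_parity {V : Type*} {H : SimpleGraph V} {side : V → Bool}
    (hbip : ∀ a b, H.Adj a b → side a ≠ side b) (l : List V) (hch : l.Chain' H.Adj) :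
    ∀ (i : ℕ) (hi : i < l.length) (h0 : 0 < l.length),
      side (l.get ⟨i, hi⟩) =
        if i % 2 = 0 then side (l.get ⟨0, h0⟩) else ! side (l.get ⟨0, h0⟩) := by
  intro i
  induction i with
  | zero => intro hi h0; simp
  | succ i ih =>
    intro hi h0
    have hadj : H.Adj (l.get ⟨i, by omega⟩) (l.get ⟨i+1, hi⟩) :=
      List.isChain_iff_getElem.mp hch i (by omega)
    have hne := hbip _ _ hadj
    have hstep : side (l.get ⟨i+1, hi⟩) = ! side (l.get ⟨i, by omega⟩) := by
      revert hne
      cases side (l.get ⟨i+1, hi⟩) <;> cases side (l.get ⟨i, by omega⟩) <;> simp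
    have hih := ih (by omega) h0
    rw [hstep, hih]
    rcases Nat.mod_two_eq_zero_or_one i with h | h
    · rw [if_pos h, if_neg (by omega)]
    · rw [if_neg (by omega), if_pos (by omega), Bool.not_not]

lemma bip_edge_bound {V : Type*} [Fintype V] (k : ℕ) (hk : 1 ≤ k) :
    ∀ (E : ℕ) (H : SimpleGraph V) (side : V → Bool),
      (∀ a b, H.Adj a b → side a ≠ side b) →
      (∀ l : List V, l.Nodup → l.Chain' H.Adj → l.length ≠ 2 * k) →
      H.edgeFinset.card = E →
      H.edgeFinset.card ≤ (k-1) * (univ.filter (fun v => ∃ w, H.Adj v w)).card := by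
  intro E
  induction E using Nat.strong_induction_on with
  | _ E ih =>
    intro H side hbip hnp hE
    by_cases hcase : ∃ v, (∃ w, H.Adj v w) ∧ H.degree v ≤ k - 1
    · obtain ⟨v, hvne, hdeg⟩ := hcase
      have hdpos : 0 < H.degree v := (SimpleGraph.degree_pos_iff_exists_adj H v).mpr hvne
      set H' := H.deleteEdges (H.incidenceSet v) with hH'
      have hadj' : ∀ a b, H'.Adj a b ↔ H.Adj a b ∧ s(a,b) ∉ H.incidenceSet v := by
        intro a b; rw [hH', SimpleGraph.deleteEdges_adj]
      have hEF : H'.edgeFinset = H.edgeFinset \ H.incidenceFinset v := by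
        simp only [SimpleGraph.edgeFinset, hH', SimpleGraph.edgeSet_deleteEdges,
          SimpleGraph.incidenceFinset]
        rw [Set.toFinset_diff]
      have hsub : H.incidenceFinset v ⊆ H.edgeFinset := by
        intro e he
        rw [SimpleGraph.mem_incidenceFinset] at he
        rw [SimpleGraph.mem_edgeFinset]
        exact he.1
      have hcard' : H'.edgeFinset.card = H.edgeFinset.card - H.degree v := by
        rw [hEF, Finset.card_sdiff_of_subset hsub, SimpleGraph.card_incidenceFinset_eq_degree]
      have hdE : H.degree v ≤ H.edgeFinset.card := by
        calc H.degree v = (H.incidenceFinset v).card :=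
              (SimpleGraph.card_incidenceFinset_eq_degree _ _).symm
        _ ≤ _ := Finset.card_le_card hsub
      have hlt : H'.edgeFinset.card < E := by rw [hcard', ← hE]; omega
      have hbip' : ∀ a b, H'.Adj a b → side a ≠ side b := by
        intro a b hab; exact hbip a b ((hadj' a b).mp hab).1
      have hnp' : ∀ l : List V, l.Nodup → l.Chain' H'.Adj → l.length ≠ 2 * k := by
        intro l hnd hch
        exact hnp l hnd (hch.imp (fun a b hab => ((hadj' a b).mp hab).1))
      have hIH : H'.edgeFinset.card ≤ (k-1) * (univ.filter (fun u => ∃ w, H'.Adj u w)).card := by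
        convert ih _ hlt H' side hbip' hnp' (by convert rfl)
      have hsub2 : (univ.filter (fun u => ∃ w, H'.Adj u w)) ⊆
          (univ.filter (fun u => ∃ w, H.Adj u w)).erase v := by
        intro u hu
        rw [Finset.mem_filter] at hu
        obtain ⟨-, w, hw⟩ := hu
        rw [Finset.mem_erase, Finset.mem_filter]
        refine ⟨?_, Finset.mem_univ u, w, ((hadj' u w).mp hw).1⟩
        rintro rfl
        have h1 := (hadj' u w).mp hw
        exact h1.2 ⟨(SimpleGraph.mem_edgeSet H).mpr h1.1, by simp⟩
      have hvmem : v ∈ univ.filter (fun u => ∃ w, H.Adj u w) := by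
        rw [Finset.mem_filter]; exact ⟨Finset.mem_univ v, hvne⟩
      have hc1 : (univ.filter (fun u => ∃ w, H'.Adj u w)).card ≤
          (univ.filter (fun u => ∃ w, H.Adj u w)).card - 1 := by
        calc _ ≤ ((univ.filter (fun u => ∃ w, H.Adj u w)).erase v).card :=
              Finset.card_le_card hsub2
        _ = _ := by rw [Finset.card_erase_of_mem hvmem]
      have hcpos : 1 ≤ (univ.filter (fun u => ∃ w, H.Adj u w)).card :=
        Finset.card_pos.mpr ⟨v, hvmem⟩
      have hdk : H.degree v ≤ k - 1 := hdeg
      calc H.edgeFinset.card = H'.edgeFinset.card + H.degree v := by omega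
      _ ≤ (k-1) * ((univ.filter (fun u => ∃ w, H.Adj u w)).card - 1) + (k-1) := by
            have := hIH
            have h2 : (k-1) * (univ.filter (fun u => ∃ w, H'.Adj u w)).card ≤
                (k-1) * ((univ.filter (fun u => ∃ w, H.Adj u w)).card - 1) :=
              Nat.mul_le_mul_left _ hc1
            omega
      _ ≤ (k-1) * (univ.filter (fun u => ∃ w, H.Adj u w)).card := by
            have h3 : (k-1) * 1 ≤ (k-1) * (univ.filter (fun u => ∃ w, H.Adj u w)).card :=
              Nat.mul_le_mul_left _ hcpos
            rw [Nat.mul_sub_one]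
            omega
    · push_neg at hcase
      by_cases hne : H.edgeFinset.card = 0
      · omega
      · exfalso
        obtain ⟨e, he⟩ := Finset.card_pos.mp (by omega : 0 < H.edgeFinset.card)
        induction e with
        | h a b =>
          rw [SimpleGraph.mem_edgeFinset] at he
          have hab : H.Adj a b := he
          -- greedy maximal list
          set Pl : ℕ → Prop := fun len => ∃ l : List V,
            l.length = len ∧ l ≠ [] ∧ l.Nodup ∧ l.Chain' H.Adj with hPl
          have hP2 : Pl 2 := ⟨[a, b], rfl, by simp, by simp [hab.ne], by simp [List.Chain', hab]⟩
          have hn2 : 2 ≤ Fintype.card V := by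
            have : ([a,b] : List V).Nodup := by simp [hab.ne]
            have := this.length_le_card
            simpa using this
          set N := Nat.findGreatest Pl (Fintype.card V) with hN
          obtain ⟨l, hlen, hlne, hlnd, hlch⟩ := Nat.findGreatest_spec hn2 hP2
          have hN2 : 2 ≤ N := Nat.le_findGreatest hn2 hP2
          have hmax : ∀ u, H.Adj (l.head hlne) u → u ∈ l := by
            intro u hu
            by_contra hul
            have hP1 : Pl (N + 1) := by
              refine ⟨u :: l, by simp [hlen, hN], by simp, by simp [hul, hlnd], ?_⟩
              rw [List.Chain', List.isChain_cons]
              exact ⟨fun y hy => by rw [List.head?_eq_head hlne] at hy; rw [← Option.some_inj.mp hy]; exact hu.symm, hlch⟩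
            have hle : N + 1 ≤ Fintype.card V := by
              obtain ⟨l', hl', -, hnd', -⟩ := hP1
              have := hnd'.length_le_card
              omega
            exact Nat.findGreatest_is_greatest (by omega) hle hP1
          by_cases hNk : 2 * k ≤ N
          · apply hnp (l.take (2*k)) (hlnd.sublist (List.take_sublist _ _))
              (hlch.take _)
            rw [List.length_take]
            omega
          · -- N < 2k : head has ≥ k nbrs all at odd positions < N ≤ 2k-1
            set x := l.head hlne with hxdef
            have hxl : 0 < l.length := by rw [hlen]; omega
            have hhead : l.get ⟨0, hxl⟩ = x := by
              rw [hxdef, ← List.get_mk_zero hxl]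
            have hdegx : k ≤ H.degree x := by
              have hxadj : ∃ w, H.Adj x w := by
                refine ⟨(l.get ⟨1, by omega⟩), ?_⟩
                have h5 : H.Adj (l.get ⟨0, hxl⟩) (l.get ⟨1, by omega⟩) := List.isChain_iff_getElem.mp hlch 0 (by omega)
                rw [hhead] at h5
                exact h5
              have := hcase x hxadj
              omega
            have hinj : Set.InjOn (fun u => l.idxOf u) (H.neighborFinset x) := by
              intro u hu u' hu' huu
              have h1 : u ∈ l := hmax u (by
                rw [Finset.mem_coe, SimpleGraph.mem_neighborFinset] at hu; exact hu)
              have h2 : u' ∈ l := hmax u' (by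
                rw [Finset.mem_coe, SimpleGraph.mem_neighborFinset] at hu'; exact hu')
              exact (List.idxOf_inj h1).mp huu
            have hmapsto : ∀ u ∈ H.neighborFinset x,
                l.idxOf u ∈ (Finset.range l.length).filter (fun i => i % 2 = 1) := by
              intro u hu
              rw [SimpleGraph.mem_neighborFinset] at hu
              have h1 : u ∈ l := hmax u hu
              have h2 : l.idxOf u < l.length := List.idxOf_lt_length_iff.mpr h1
              rw [Finset.mem_filter, Finset.mem_range]
              refine ⟨h2, ?_⟩
              have hget : l.get ⟨l.idxOf u, h2⟩ = u := List.idxOf_get h2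
              have hpar := chain_side_parity hbip l hlch (l.idxOf u) h2 hxl
              rw [hget, hhead] at hpar
              by_contra hodd
              rw [if_pos (by omega)] at hpar
              exact hbip x u hu hpar.symm
            have hcard : k ≤ ((Finset.range l.length).filter (fun i => i % 2 = 1)).card := by
              calc k ≤ H.degree x := hdegx
              _ = (H.neighborFinset x).card := rfl
              _ ≤ _ := Finset.card_le_card_of_injOn _ (fun u hu => hmapsto u hu) hinj
            rw [card_odd_range] at hcard
            omega





attribute [local instance] Classical.propDecidable

variable {α : Type*} [Fintype α] [DecidableEq α]

lemma exists_perm_of_triple (x y z u v w : α) (hxy : x ≠ y) (hxz : x ≠ z) (hyz : y ≠ z)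
    (huv : u ≠ v) (huw : u ≠ w) (hvw : v ≠ w) :
    ∃ σ : Equiv.Perm α, σ x = u ∧ σ y = v ∧ σ z = w := by
  classical
  -- three step construction
  obtain ⟨σ1, h1⟩ : ∃ σ1 : Equiv.Perm α, σ1 x = u := ⟨Equiv.swap x u, Equiv.swap_apply_left x u⟩
  have h1y : σ1 y ≠ u := by
    intro h; apply hxy; apply σ1.injective; rw [h1, h]
  have h1z : σ1 z ≠ u := by
    intro h; apply hxz; apply σ1.injective; rw [h1, h]
  obtain ⟨σ2, h2, h2u⟩ : ∃ σ2 : Equiv.Perm α, σ2 (σ1 y) = v ∧ σ2 u = u := by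
    refine ⟨Equiv.swap (σ1 y) v, Equiv.swap_apply_left _ _, ?_⟩
    exact Equiv.swap_apply_of_ne_of_ne h1y.symm huv
  have h2z : σ2 (σ1 z) ≠ v := by
    intro h; apply hyz; apply σ1.injective; apply σ2.injective; rw [h2, h]
  have h2zu : σ2 (σ1 z) ≠ u := by
    intro h
    have : σ2 (σ1 z) = σ2 u := by rw [h, h2u]
    exact h1z (σ2.injective this)
  obtain ⟨σ3, h3, h3u, h3v⟩ : ∃ σ3 : Equiv.Perm α, σ3 (σ2 (σ1 z)) = w ∧ σ3 u = u ∧ σ3 v = v := by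
    refine ⟨Equiv.swap (σ2 (σ1 z)) w, Equiv.swap_apply_left _ _, ?_, ?_⟩
    · exact Equiv.swap_apply_of_ne_of_ne h2zu.symm huw
    · exact Equiv.swap_apply_of_ne_of_ne h2z.symm hvw
  refine ⟨(σ3 * σ2 * σ1 : Equiv.Perm α), ?_, ?_, ?_⟩
  · simp [Equiv.Perm.mul_apply, h1, h2u, h3u]
  · simp [Equiv.Perm.mul_apply, h2, h3v]
  · simp [Equiv.Perm.mul_apply, h3]

section Triples

variable (x y z : α)

/-- fiber of permutations sending `(x,y,z)` to `d` -/
noncomputable def Fib (d : α × α × α) : Finset (Equiv.Perm α) :=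
  univ.filter (fun π => (π x, π y, π z) = d)

noncomputable def Dtriples (α : Type*) [Fintype α] [DecidableEq α] : Finset (α × α × α) :=
  univ.filter (fun d => d.1 ≠ d.2.1 ∧ d.1 ≠ d.2.2 ∧ d.2.1 ≠ d.2.2)

lemma fib_card_const (hxy : x ≠ y) (hxz : x ≠ z) (hyz : y ≠ z)
    {d d' : α × α × α} (hd : d ∈ Dtriples α) (hd' : d' ∈ Dtriples α) :
    (Fib x y z d).card = (Fib x y z d').card := by
  obtain ⟨u, v, w⟩ := d
  obtain ⟨u', v', w'⟩ := d'
  rw [Dtriples, Finset.mem_filter] at hd hd'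
  obtain ⟨-, h1, h2, h3⟩ := hd
  obtain ⟨-, h1', h2', h3'⟩ := hd'
  obtain ⟨σ, hσ1, hσ2, hσ3⟩ := exists_perm_of_triple u v w u' v' w' h1 h2 h3 h1' h2' h3'
  apply Finset.card_bij' (fun π _ => σ * π) (fun π _ => σ⁻¹ * π)
  · intro π hπ
    rw [Fib, Finset.mem_filter] at hπ ⊢
    obtain ⟨-, hπ⟩ := hπ
    simp only [Prod.mk.injEq] at hπ
    refine ⟨Finset.mem_univ _, ?_⟩
    simp [Equiv.Perm.mul_apply, hπ.1, hπ.2.1, hπ.2.2, hσ1, hσ2, hσ3]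
  · intro π hπ
    rw [Fib, Finset.mem_filter] at hπ ⊢
    obtain ⟨-, hπ⟩ := hπ
    simp only [Prod.mk.injEq] at hπ
    refine ⟨Finset.mem_univ _, ?_⟩
    have e1 : π x = u' := hπ.1
    have e2 : π y = v' := hπ.2.1
    have e3 : π z = w' := hπ.2.2
    simp only [Equiv.Perm.mul_apply, e1, e2, e3, Prod.mk.injEq]
    refine ⟨?_, ?_, ?_⟩
    · apply σ.injective; simp [hσ1]
    · apply σ.injective; simp [hσ2]
    · apply σ.injective; simp [hσ3]
  · intro π _; simp [mul_assoc]
  · intro π _; simp [mul_assoc]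

lemma perm_partition (hxy : x ≠ y) (hxz : x ≠ z) (hyz : y ≠ z) :
    (univ : Finset (Equiv.Perm α)).card = ∑ d ∈ Dtriples α, (Fib x y z d).card := by
  have H : ∀ π ∈ (univ : Finset (Equiv.Perm α)), (π x, π y, π z) ∈ Dtriples α := by
    intro π _
    rw [Dtriples, Finset.mem_filter]
    exact ⟨Finset.mem_univ _, by simp [π.injective.ne_iff, hxy, hxz, hyz]⟩
  rw [Finset.card_eq_sum_card_fiberwise H]
  apply Finset.sum_congr rfl
  intro d _
  congr 1

noncomputable def RBperm (χ0 : α → Fin 3) : Finset (Equiv.Perm α) :=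
  univ.filter (fun π => χ0 (π x) ≠ χ0 (π y) ∧ χ0 (π x) ≠ χ0 (π z) ∧ χ0 (π y) ≠ χ0 (π z))

noncomputable def DtriplesRB (α : Type*) [Fintype α] [DecidableEq α] (χ0 : α → Fin 3) :
    Finset (α × α × α) :=
  univ.filter (fun d => χ0 d.1 ≠ χ0 d.2.1 ∧ χ0 d.1 ≠ χ0 d.2.2 ∧ χ0 d.2.1 ≠ χ0 d.2.2)

lemma rb_subset_dtriples (χ0 : α → Fin 3) : DtriplesRB α χ0 ⊆ Dtriples α := by
  intro d hd
  rw [DtriplesRB, Finset.mem_filter] at hd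
  rw [Dtriples, Finset.mem_filter]
  refine ⟨Finset.mem_univ _, ?_, ?_, ?_⟩
  · intro h; exact hd.2.1 (by rw [h])
  · intro h; exact hd.2.2.1 (by rw [h])
  · intro h; exact hd.2.2.2 (by rw [h])

lemma rb_partition (χ0 : α → Fin 3) :
    (RBperm x y z χ0).card = ∑ d ∈ DtriplesRB α χ0, (Fib x y z d).card := by
  have H : ∀ π ∈ RBperm x y z χ0, (π x, π y, π z) ∈ DtriplesRB α χ0 := by
    intro π hπ
    rw [RBperm, Finset.mem_filter] at hπ
    rw [DtriplesRB, Finset.mem_filter]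
    exact ⟨Finset.mem_univ _, hπ.2⟩
  rw [Finset.card_eq_sum_card_fiberwise H]
  apply Finset.sum_congr rfl
  intro d hd
  congr 1
  obtain ⟨d1, d2, d3⟩ := d
  rw [DtriplesRB, Finset.mem_filter] at hd
  rw [RBperm, Fib]
  ext π
  simp only [Finset.mem_filter, Finset.mem_univ, true_and, Finset.filter_filter,
    Prod.mk.injEq]
  constructor
  · rintro ⟨-, h⟩; exact h
  · intro h
    obtain ⟨h1, h2, h3⟩ := h
    refine ⟨?_, h1, h2, h3⟩
    rw [h1, h2, h3]
    exact hd.2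

lemma core_perm_bound (hxy : x ≠ y) (hxz : x ≠ z) (hyz : y ≠ z) (χ0 : α → Fin 3)
    (hne : (DtriplesRB α χ0).Nonempty)
    (hΔ : 2 * (Dtriples α).card ≤ 9 * (DtriplesRB α χ0).card) :
    2 * (univ : Finset (Equiv.Perm α)).card ≤ 9 * (RBperm x y z χ0).card := by
  obtain ⟨d0, hd0⟩ := hne
  have hd0' : d0 ∈ Dtriples α := rb_subset_dtriples χ0 hd0
  set c := (Fib x y z d0).card with hc
  have h1 : (univ : Finset (Equiv.Perm α)).card = (Dtriples α).card * c := by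
    rw [perm_partition x y z hxy hxz hyz]
    rw [Finset.sum_congr rfl (fun d hd => fib_card_const x y z hxy hxz hyz hd hd0')]
    rw [Finset.sum_const, smul_eq_mul]
  have h2 : (RBperm x y z χ0).card = (DtriplesRB α χ0).card * c := by
    rw [rb_partition x y z χ0]
    rw [Finset.sum_congr rfl
      (fun d hd => fib_card_const x y z hxy hxz hyz (rb_subset_dtriples χ0 hd) hd0')]
    rw [Finset.sum_const, smul_eq_mul]
  rw [h1, h2, ← mul_assoc, ← mul_assoc]
  exact Nat.mul_le_mul_right c hΔ

end Triples



section Counting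

variable {α : Type*} [Fintype α] [DecidableEq α]

lemma card_dtriples :
    (Dtriples α).card =
      Fintype.card α * (Fintype.card α - 1) * (Fintype.card α - 2) := by
  have hbij : (Dtriples α).card = Fintype.card (Fin 3 ↪ α) := by
    rw [← Finset.card_univ]
    symm
    apply Finset.card_bij (fun (e : Fin 3 ↪ α) _ => (e 0, e 1, e 2))
    · intro e _
      rw [Dtriples, Finset.mem_filter]
      refine ⟨Finset.mem_univ _, ?_, ?_, ?_⟩ <;> simp [e.injective.ne_iff]
    · intro e _ e' _ h
      simp only [Prod.mk.injEq] at h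
      ext i
      fin_cases i <;> simp [h.1, h.2.1, h.2.2]
    · rintro ⟨u, v, w⟩ hd
      rw [Dtriples, Finset.mem_filter] at hd
      obtain ⟨-, h1, h2, h3⟩ := hd
      have hinj : Function.Injective ![u, v, w] := by
        intro a b hab
        fin_cases a <;> fin_cases b <;>
          simp only [Matrix.cons_val_zero, Matrix.cons_val_one, Matrix.head_cons,
            Matrix.cons_val_two, Matrix.tail_cons] at hab <;>
          first
            | rfl
            | exact absurd hab h1 | exact absurd hab h2 | exact absurd hab h3
            | exact absurd hab.symm h1 | exact absurd hab.symm h2 | exact absurd hab.symm h3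
      refine ⟨⟨![u, v, w], hinj⟩, Finset.mem_univ _, ?_⟩
      simp
  rw [hbij, Fintype.card_embedding_eq]
  simp [Nat.descFactorial]
  ring

lemma card_dtriplesRB (χ0 : α → Fin 3) :
    (DtriplesRB α χ0).card =
      6 * ((univ.filter (fun a => χ0 a = 0)).card *
        ((univ.filter (fun a => χ0 a = 1)).card *
          (univ.filter (fun a => χ0 a = 2)).card)) := by
  classical
  set C3 : Finset (Fin 3 × Fin 3 × Fin 3) :=
    univ.filter (fun q => q.1 ≠ q.2.1 ∧ q.1 ≠ q.2.2 ∧ q.2.1 ≠ q.2.2) with hC3def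
  have H : ∀ d ∈ DtriplesRB α χ0, (χ0 d.1, χ0 d.2.1, χ0 d.2.2) ∈ C3 := by
    intro d hd
    rw [DtriplesRB, Finset.mem_filter] at hd
    rw [hC3def, Finset.mem_filter]
    exact ⟨Finset.mem_univ _, hd.2⟩
  rw [Finset.card_eq_sum_card_fiberwise H]
  have hfib : ∀ q ∈ C3,
      ((DtriplesRB α χ0).filter (fun d => (χ0 d.1, χ0 d.2.1, χ0 d.2.2) = q)).card =
        (univ.filter (fun a => χ0 a = q.1)).card *
          ((univ.filter (fun a => χ0 a = q.2.1)).card *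
            (univ.filter (fun a => χ0 a = q.2.2)).card) := by
    intro q hq
    obtain ⟨q1, q2, q3⟩ := q
    rw [hC3def, Finset.mem_filter] at hq
    have hset : (DtriplesRB α χ0).filter
          (fun d => (χ0 d.1, χ0 d.2.1, χ0 d.2.2) = (q1, q2, q3)) =
        (univ.filter (fun a => χ0 a = q1)) ×ˢ
          ((univ.filter (fun a => χ0 a = q2)) ×ˢ (univ.filter (fun a => χ0 a = q3))) := by
      ext d
      obtain ⟨d1, d2, d3⟩ := d
      simp only [Finset.mem_filter, Finset.mem_product, Finset.mem_univ, true_and,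
        DtriplesRB, Prod.mk.injEq]
      constructor
      · rintro ⟨-, h⟩
        exact h
      · intro h
        refine ⟨?_, h⟩
        rw [h.1, h.2.1, h.2.2]
        exact hq.2
    rw [hset, Finset.card_product, Finset.card_product]
  rw [Finset.sum_congr rfl hfib]
  have hC3 : C3 = ({((0:Fin 3), (1:Fin 3), (2:Fin 3)), (0, 2, 1), (1, 0, 2), (1, 2, 0),
      (2, 0, 1), (2, 1, 0)} : Finset (Fin 3 × Fin 3 × Fin 3)) := by
    ext q
    rw [hC3def, Finset.mem_filter]
    simp only [Finset.mem_univ, true_and, Finset.mem_insert, Finset.mem_singleton]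
    revert q; decide
  rw [hC3]
  rw [Finset.sum_insert (by decide), Finset.sum_insert (by decide),
    Finset.sum_insert (by decide), Finset.sum_insert (by decide),
    Finset.sum_insert (by decide), Finset.sum_singleton]
  ring

lemma card_range_mod3 (r : ℕ) (hr : r < 3) (n : ℕ) :
    ((Finset.range n).filter (fun i => i % 3 = r)).card = (n + 2 - r) / 3 := by
  induction n with
  | zero => simp; omega
  | succ n ih =>
    rw [Finset.range_add_one, Finset.filter_insert]
    by_cases h : n % 3 = r
    · rw [if_pos h, Finset.card_insert_of_notMem (by simp), ih]; omega
    · rw [if_neg h, ih]; omega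

lemma card_fin_mod3 (n r : ℕ) (hr : r < 3) :
    ((univ : Finset (Fin n)).filter (fun x : Fin n => (x : ℕ) % 3 = r)).card = (n + 2 - r) / 3 := by
  rw [← card_range_mod3 r hr n]
  apply Finset.card_bij (fun (x : Fin n) _ => (x : ℕ))
  · intro x hx
    rw [Finset.mem_filter] at hx ⊢
    exact ⟨Finset.mem_range.mpr x.2, hx.2⟩
  · intro x _ y _ h
    exact Fin.ext h
  · intro i hi
    rw [Finset.mem_filter, Finset.mem_range] at hi
    exact ⟨⟨i, hi.1⟩, by rw [Finset.mem_filter]; exact ⟨Finset.mem_univ _, hi.2⟩, rfl⟩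

end Counting

lemma exists_good_coloring {n : ℕ} (hn : 3 ≤ n) (G : SimpleGraph (Fin n)) :
    ∃ χ : Fin n → Fin 3,
      (∀ i : Fin 3, ((univ : Finset (Fin n)).filter (fun x => χ x = i)).card ≤ (n + 2) / 3) ∧
      2 * (G.cliqueFinset 3).card ≤
        9 * ((G.cliqueFinset 3).filter
          (fun s => ∀ i : Fin 3, ∃ x ∈ s, χ x = i)).card := by
  classical
  set χ0 : Fin n → Fin 3 := fun x => ⟨(x : ℕ) % 3, by omega⟩ with hχ0
  have hfib : ∀ i : Fin 3,
      ((univ : Finset (Fin n)).filter (fun x => χ0 x = i)).card = (n + 2 - (i : ℕ)) / 3 := by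
    intro i
    have : ∀ x : Fin n, (χ0 x = i) ↔ ((x : ℕ) % 3 = (i : ℕ)) := by
      intro x
      rw [hχ0, Fin.ext_iff]
    rw [Finset.filter_congr (fun x _ => by rw [this x])]
    exact card_fin_mod3 n i i.2
  have hs0 : ((univ : Finset (Fin n)).filter (fun x => χ0 x = 0)).card = (n + 2) / 3 := by
    rw [hfib 0]; norm_num
  have hs1 : ((univ : Finset (Fin n)).filter (fun x => χ0 x = 1)).card = (n + 1) / 3 := by
    rw [hfib 1]; norm_num
  have hs2 : ((univ : Finset (Fin n)).filter (fun x => χ0 x = 2)).card = n / 3 := by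
    rw [hfib 2]; norm_num
  have hΔcard : (Dtriples (Fin n)).card = n * (n - 1) * (n - 2) := by
    rw [card_dtriples]; simp
  have hRBcard : (DtriplesRB (Fin n) χ0).card =
      6 * ((n + 2) / 3 * ((n + 1) / 3 * (n / 3))) := by
    rw [card_dtriplesRB, hs0, hs1, hs2]
  have hArith : 2 * (Dtriples (Fin n)).card ≤ 9 * (DtriplesRB (Fin n) χ0).card := by
    rw [hΔcard, hRBcard]
    have e0 : n ≤ 3 * ((n + 2) / 3) := by omega
    have e1 : n - 1 ≤ 3 * ((n + 1) / 3) := by omega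
    have e2 : n - 2 ≤ 3 * (n / 3) := by omega
    calc 2 * (n * (n - 1) * (n - 2))
        ≤ 2 * ((3 * ((n + 2) / 3)) * (3 * ((n + 1) / 3)) * (3 * (n / 3))) := by
          exact Nat.mul_le_mul_left 2 (Nat.mul_le_mul (Nat.mul_le_mul e0 e1) e2)
    _ = 9 * (6 * ((n + 2) / 3 * ((n + 1) / 3 * (n / 3)))) := by ring
  have hRBne : (DtriplesRB (Fin n) χ0).Nonempty := by
    rw [← Finset.card_pos, hRBcard]
    have : 1 ≤ (n + 2) / 3 := by omega
    have : 1 ≤ (n + 1) / 3 := by omega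
    have : 1 ≤ n / 3 := by omega
    positivity
  set T := G.cliqueFinset 3 with hT
  set P := (univ : Finset (Equiv.Perm (Fin n))).card with hP
  have hPpos : 0 < P := Finset.card_pos.mpr ⟨1, Finset.mem_univ _⟩
  have haux : ∀ a b c : Fin 3, (∀ i, a = i ∨ b = i ∨ c = i) ↔ (a ≠ b ∧ a ≠ c ∧ b ≠ c) := by
    decide
  have hper : ∀ s ∈ T, 2 * P ≤
      9 * ((univ : Finset (Equiv.Perm (Fin n))).filter
        (fun π => ∀ i : Fin 3, ∃ x ∈ s, χ0 (π x) = i)).card := by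
    intro s hsT
    have hs3 : s.card = 3 := (SimpleGraph.mem_cliqueFinset_iff.mp hsT).2
    obtain ⟨x, y, z, hxy, hxz, hyz, rfl⟩ := Finset.card_eq_three.mp hs3
    have heq : (univ : Finset (Equiv.Perm (Fin n))).filter
        (fun π => ∀ i : Fin 3, ∃ a ∈ ({x, y, z} : Finset (Fin n)), χ0 (π a) = i) =
        RBperm x y z χ0 := by
      rw [RBperm]
      ext π
      simp only [Finset.mem_filter, Finset.mem_univ, true_and, Finset.mem_insert,
        Finset.mem_singleton]
      rw [← haux (χ0 (π x)) (χ0 (π y)) (χ0 (π z))]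
      constructor
      · intro h i
        obtain ⟨a, ha, hai⟩ := h i
        rcases ha with rfl | rfl | rfl
        · exact Or.inl hai
        · exact Or.inr (Or.inl hai)
        · exact Or.inr (Or.inr hai)
      · intro h i
        rcases h i with hh | hh | hh
        · exact ⟨x, Or.inl rfl, hh⟩
        · exact ⟨y, Or.inr (Or.inl rfl), hh⟩
        · exact ⟨z, Or.inr (Or.inr rfl), hh⟩
    rw [heq]
    exact core_perm_bound x y z hxy hxz hyz χ0 hRBne hArith
  set R : Equiv.Perm (Fin n) → ℕ :=
    fun π => (T.filter (fun s => ∀ i : Fin 3, ∃ x ∈ s, χ0 (π x) = i)).card with hR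
  have hswap : ∑ π ∈ (univ : Finset (Equiv.Perm (Fin n))), R π =
      ∑ s ∈ T, ((univ : Finset (Equiv.Perm (Fin n))).filter
        (fun π => ∀ i : Fin 3, ∃ x ∈ s, χ0 (π x) = i)).card := by
    have h1 : ∀ π : Equiv.Perm (Fin n), R π =
        ∑ s ∈ T, if (∀ i : Fin 3, ∃ x ∈ s, χ0 (π x) = i) then 1 else 0 := by
      intro π; rw [hR]; exact Finset.card_filter _ _
    rw [Finset.sum_congr rfl (fun π _ => h1 π), Finset.sum_comm]
    exact Finset.sum_congr rfl (fun s _ => (Finset.card_filter _ _).symm)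
  obtain ⟨π0, -, hπ0⟩ := Finset.exists_max_image (univ : Finset (Equiv.Perm (Fin n))) R
    ⟨1, Finset.mem_univ _⟩
  have hchain : P * (2 * T.card) ≤ P * (9 * R π0) := by
    calc P * (2 * T.card) = T.card * (2 * P) := by ring
    _ = ∑ _s ∈ T, 2 * P := by rw [Finset.sum_const, smul_eq_mul]
    _ ≤ ∑ s ∈ T, 9 * ((univ : Finset (Equiv.Perm (Fin n))).filter
          (fun π => ∀ i : Fin 3, ∃ x ∈ s, χ0 (π x) = i)).card := Finset.sum_le_sum hper
    _ = 9 * ∑ s ∈ T, ((univ : Finset (Equiv.Perm (Fin n))).filter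
          (fun π => ∀ i : Fin 3, ∃ x ∈ s, χ0 (π x) = i)).card := by rw [Finset.mul_sum]
    _ = 9 * ∑ π ∈ (univ : Finset (Equiv.Perm (Fin n))), R π := by rw [hswap]
    _ ≤ 9 * ∑ _π ∈ (univ : Finset (Equiv.Perm (Fin n))), R π0 := by
          exact Nat.mul_le_mul_left 9 (Finset.sum_le_sum (fun π hπ => hπ0 π hπ))
    _ = P * (9 * R π0) := by rw [Finset.sum_const, smul_eq_mul]; ring
  have hfinal : 2 * T.card ≤ 9 * R π0 := Nat.le_of_mul_le_mul_left hchain hPpos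
  refine ⟨fun x => χ0 (π0 x), ?_, ?_⟩
  · intro i
    have hbij : ((univ : Finset (Fin n)).filter (fun x => χ0 (π0 x) = i)).card =
        ((univ : Finset (Fin n)).filter (fun x => χ0 x = i)).card := by
      apply Finset.card_bij (fun x _ => π0 x)
      · intro x hx
        rw [Finset.mem_filter] at hx ⊢
        exact ⟨Finset.mem_univ _, hx.2⟩
      · intro x _ y _ h
        exact π0.injective h
      · intro y hy
        rw [Finset.mem_filter] at hy
        exact ⟨π0.symm y, by rw [Finset.mem_filter]; simpa using hy.2, by simp⟩
    rw [hbij, hfib i]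
    have : (i : ℕ) < 3 := i.2
    omega
  · exact hfinal

section StepA

variable {n : ℕ}

noncomputable def Epair (G : SimpleGraph (Fin n)) (χ : Fin n → Fin 3) (γ1 γ2 γ3 : Fin 3) :
    Finset (Fin n × Fin n) :=
  univ.filter (fun p => χ p.1 = γ1 ∧ χ p.2 = γ2 ∧ G.Adj p.1 p.2 ∧
    ∃ c, χ c = γ3 ∧ G.Adj p.1 c ∧ G.Adj p.2 c)

noncomputable def TriRB (G : SimpleGraph (Fin n)) (χ : Fin n → Fin 3) :
    Finset (Finset (Fin n)) :=
  (G.cliqueFinset 3).filter (fun s => ∀ i : Fin 3, ∃ x ∈ s, χ x = i)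

noncomputable def pick (v0 : Fin n) (χ : Fin n → Fin 3) (i : Fin 3) (s : Finset (Fin n)) :
    Fin n :=
  if h : (s.filter (fun x => χ x = i)).Nonempty then (s.filter (fun x => χ x = i)).min' h
  else v0

lemma pick_spec {v0 : Fin n} {χ : Fin n → Fin 3} {i : Fin 3} {s : Finset (Fin n)}
    {G : SimpleGraph (Fin n)} (hs : s ∈ TriRB G χ) :
    pick v0 χ i s ∈ s ∧ χ (pick v0 χ i s) = i := by
  rw [TriRB, Finset.mem_filter] at hs
  obtain ⟨x, hx, hxi⟩ := hs.2 i
  have hne : (s.filter (fun x => χ x = i)).Nonempty :=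
    ⟨x, Finset.mem_filter.mpr ⟨hx, hxi⟩⟩
  rw [pick, dif_pos hne]
  have := Finset.min'_mem _ hne
  rw [Finset.mem_filter] at this
  exact this

lemma pick_eq_of_mem {v0 : Fin n} {χ : Fin n → Fin 3} {i : Fin 3} {s : Finset (Fin n)}
    {G : SimpleGraph (Fin n)} (hs : s ∈ TriRB G χ) {a : Fin n} (ha : a ∈ s)
    (hai : χ a = i) : pick v0 χ i s = a := by
  -- uniqueness of the element of color i
  have h1 := pick_spec (v0 := v0) (i := i) hs
  by_contra hne
  -- then s has ≥ 2 elements of color i, plus one of each other color: card > 3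
  rw [TriRB, Finset.mem_filter, SimpleGraph.mem_cliqueFinset_iff] at hs
  have hcard : s.card = 3 := hs.1.2
  obtain ⟨i1, i2, h12, hii1, hii2⟩ : ∃ i1 i2 : Fin 3, i1 ≠ i2 ∧ i ≠ i1 ∧ i ≠ i2 := by
    fin_cases i
    · exact ⟨1, 2, by decide, by decide, by decide⟩
    · exact ⟨0, 2, by decide, by decide, by decide⟩
    · exact ⟨0, 1, by decide, by decide, by decide⟩
  obtain ⟨b1, hb1, hb1c⟩ := hs.2 i1
  obtain ⟨b2, hb2, hb2c⟩ := hs.2 i2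
  have hsub : {a, pick v0 χ i s, b1, b2} ⊆ s := by
    intro x hx
    simp only [Finset.mem_insert, Finset.mem_singleton] at hx
    rcases hx with rfl | rfl | rfl | rfl
    · exact ha
    · exact h1.1
    · exact hb1
    · exact hb2
  have hc4 : ({a, pick v0 χ i s, b1, b2} : Finset (Fin n)).card = 4 := by
    rw [Finset.card_insert_of_notMem, Finset.card_insert_of_notMem,
      Finset.card_insert_of_notMem, Finset.card_singleton]
    · simp only [Finset.mem_singleton]
      intro h; rw [h] at hb1c; exact h12 (hb1c ▸ hb2c ▸ rfl)
    · simp only [Finset.mem_insert, Finset.mem_singleton]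
      rintro (rfl | rfl)
      · exact hii1 (h1.2 ▸ hb1c ▸ rfl)
      · exact hii2 (h1.2 ▸ hb2c ▸ rfl)
    · simp only [Finset.mem_insert, Finset.mem_singleton]
      rintro (h | rfl | rfl)
      · exact hne h.symm
      · exact hii1 (hai ▸ hb1c ▸ rfl)
      · exact hii2 (hai ▸ hb2c ▸ rfl)
  have := Finset.card_le_card hsub
  omega

lemma tri_eq_picks {v0 : Fin n} {χ : Fin n → Fin 3} {s : Finset (Fin n)}
    {G : SimpleGraph (Fin n)} (hs : s ∈ TriRB G χ) :
    s = {pick v0 χ 0 s, pick v0 χ 1 s, pick v0 χ 2 s} := by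
  have h0 := pick_spec (v0 := v0) (i := 0) hs
  have h1 := pick_spec (v0 := v0) (i := 1) hs
  have h2 := pick_spec (v0 := v0) (i := 2) hs
  have hcard : s.card = 3 := by
    rw [TriRB, Finset.mem_filter, SimpleGraph.mem_cliqueFinset_iff] at hs
    exact hs.1.2
  have hne01 : pick v0 χ 0 s ≠ pick v0 χ 1 s := fun h => by
    rw [h] at h0; exact absurd (h0.2 ▸ h1.2) (by decide)
  have hne02 : pick v0 χ 0 s ≠ pick v0 χ 2 s := fun h => by
    rw [h] at h0; exact absurd (h0.2 ▸ h2.2) (by decide)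
  have hne12 : pick v0 χ 1 s ≠ pick v0 χ 2 s := fun h => by
    rw [h] at h1; exact absurd (h1.2 ▸ h2.2) (by decide)
  symm
  apply Finset.eq_of_subset_of_card_le
  · intro x hx
    simp only [Finset.mem_insert, Finset.mem_singleton] at hx
    rcases hx with rfl | rfl | rfl
    · exact h0.1
    · exact h1.1
    · exact h2.1
  · rw [hcard, Finset.card_insert_of_notMem (by simp [hne01, hne02]),
      Finset.card_insert_of_notMem (by simp [hne12]), Finset.card_singleton]

noncomputable def linkG (G : SimpleGraph (Fin n)) (χ : Fin n → Fin 3) (a : Fin n) :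
    SimpleGraph (Fin n) where
  Adj x y := G.Adj a x ∧ G.Adj a y ∧ G.Adj x y ∧
    ((χ x = 1 ∧ χ y = 2) ∨ (χ x = 2 ∧ χ y = 1))
  symm := by
    constructor
    rintro x y ⟨h1, h2, h3, h4⟩
    exact ⟨h2, h1, h3.symm, by tauto⟩
  loopless := by
    constructor
    rintro x ⟨-, -, h3, -⟩
    exact G.loopless.irrefl x h3

lemma linkG_adj {G : SimpleGraph (Fin n)} {χ : Fin n → Fin 3} {a x y : Fin n} :
    (linkG G χ a).Adj x y ↔ (G.Adj a x ∧ G.Adj a y ∧ G.Adj x y ∧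
      ((χ x = 1 ∧ χ y = 2) ∨ (χ x = 2 ∧ χ y = 1))) := Iff.rfl

lemma pick_ne {v0 : Fin n} {χ : Fin n → Fin 3} {s : Finset (Fin n)}
    {G : SimpleGraph (Fin n)} (hs : s ∈ TriRB G χ) {i j : Fin 3} (hij : i ≠ j) :
    pick v0 χ i s ≠ pick v0 χ j s := by
  intro h
  have hi := (pick_spec (v0 := v0) (i := i) hs).2
  have hj := (pick_spec (v0 := v0) (i := j) hs).2
  rw [h] at hi
  exact hij (by rw [← hi, hj])

lemma stepA {k : ℕ} (hn : 3 ≤ n) (hk : 2 ≤ k) (G : SimpleGraph (Fin n))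
    (hG : CycleFree G (2 * k + 1)) (χ : Fin n → Fin 3) :
    (TriRB G χ).card ≤
      (k - 1) * ((Epair G χ 0 1 2).card + (Epair G χ 0 2 1).card) := by
  classical
  set v0 : Fin n := ⟨0, by omega⟩ with hv0
  set A : Finset (Fin n) := univ.filter (fun x => χ x = 0) with hA
  have hfib : (TriRB G χ).card =
      ∑ a ∈ A, ((TriRB G χ).filter (fun s => pick v0 χ 0 s = a)).card := by
    apply Finset.card_eq_sum_card_fiberwise
    intro s hs
    rw [Finset.mem_coe, hA, Finset.mem_filter]
    exact ⟨Finset.mem_univ _, (pick_spec hs).2⟩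
  have hd01 : ∀ γ2 γ3 : Fin 3,
      ∑ a ∈ A, (univ.filter (fun b => (a, b) ∈ Epair G χ 0 γ2 γ3)).card =
        (Epair G χ 0 γ2 γ3).card := by
    intro γ2 γ3
    rw [Finset.card_eq_sum_card_fiberwise (f := fun p => p.1) (t := A) ?_]
    · apply Finset.sum_congr rfl
      intro a _
      symm
      apply Finset.card_bij (fun p _ => p.2)
      · intro p hp
        rw [Finset.mem_filter] at hp ⊢
        refine ⟨Finset.mem_univ _, ?_⟩
        have hpa : p = (a, p.2) := by
          ext
          · rw [hp.2]
          · rfl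
        rw [← hpa]
        exact hp.1
      · intro p hp q hq h
        rw [Finset.mem_filter] at hp hq
        ext
        · rw [hp.2, hq.2]
        · exact congrArg Fin.val h
      · intro b hb
        rw [Finset.mem_filter] at hb
        exact ⟨(a, b), Finset.mem_filter.mpr ⟨hb.2, rfl⟩, rfl⟩
    · intro p hp
      rw [Finset.mem_coe, Epair, Finset.mem_filter] at hp
      rw [Finset.mem_coe, hA, Finset.mem_filter]
      exact ⟨Finset.mem_univ _, hp.2.1⟩
  rw [hfib]
  have hbound : ∀ a ∈ A, ((TriRB G χ).filter (fun s => pick v0 χ 0 s = a)).card ≤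
      (k - 1) * ((univ.filter (fun b => (a, b) ∈ Epair G χ 0 1 2)).card +
        (univ.filter (fun b => (a, b) ∈ Epair G χ 0 2 1)).card) := by
    intro a haA
    rw [hA, Finset.mem_filter] at haA
    have hnp : ∀ l : List (Fin n), l.Nodup → l.Chain' (linkG G χ a).Adj →
        l.length ≠ 2 * k := by
      intro l hnd hch hlen
      have hlne : l ≠ [] := by
        intro h; rw [h] at hlen; simp at hlen; omega
      have hmem : ∀ x ∈ l, G.Adj a x := by
        intro x hx
        obtain ⟨⟨i, hi⟩, rfl⟩ := List.mem_iff_get.mp hx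
        by_cases hlast : i + 1 < l.length
        · exact (List.isChain_iff_getElem.mp hch i (by omega)).1
        · have hi1 : 1 ≤ i := by omega
          have h5 : (linkG G χ a).Adj (l.get ⟨i - 1, by omega⟩) (l.get ⟨i - 1 + 1, by omega⟩) :=
              List.isChain_iff_getElem.mp hch (i - 1) (by omega)
          have h6 : l.get ⟨i - 1 + 1, by omega⟩ = l.get ⟨i, hi⟩ := by
            congr 1
            exact Fin.ext (show i - 1 + 1 = i by omega)
          rw [h6] at h5
          exact h5.2.1
      have hanl : a ∉ l := fun h => G.loopless.irrefl a (hmem a h)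
      obtain ⟨v, c, hc, hclen⟩ := exists_cycle_of_list G (a :: l)
        (by simp only [List.length_cons, hlen]; omega)
        (by rw [List.nodup_cons]; exact ⟨hanl, hnd⟩)
        (by
          rw [List.Chain', List.isChain_cons]
          constructor
          · intro y hy
            rw [List.head?_eq_head hlne] at hy
            rw [← Option.some_inj.mp hy]
            exact hmem _ (List.head_mem hlne)
          · exact hch.imp (fun x y h => h.2.2.1))
        (by simp)
        (by
          rw [List.getLast_cons hlne]
          exact (hmem _ (List.getLast_mem hlne)).symm)
      exact hG v c hc (by rw [hclen]; simp only [List.length_cons, hlen])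
    have hedge := bip_edge_bound k (by omega) ((linkG G χ a).edgeFinset.card)
      (linkG G χ a) (fun v => decide (χ v = 2)) ?_ hnp rfl
    · have htri : ((TriRB G χ).filter (fun s => pick v0 χ 0 s = a)).card ≤
          (linkG G χ a).edgeFinset.card := by
        apply Finset.card_le_card_of_injOn
          (fun s => s(pick v0 χ 1 s, pick v0 χ 2 s))
        · intro s hs
          rw [Finset.mem_coe, Finset.mem_filter] at hs
          obtain ⟨hsT, hsa⟩ := hs
          have h0 := pick_spec (v0 := v0) (i := 0) hsT
          have h1 := pick_spec (v0 := v0) (i := 1) hsT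
          have h2 := pick_spec (v0 := v0) (i := 2) hsT
          have hclique : ∀ x ∈ s, ∀ y ∈ s, x ≠ y → G.Adj x y := by
            rw [TriRB, Finset.mem_filter, SimpleGraph.mem_cliqueFinset_iff] at hsT
            exact fun x hx y hy hxy => hsT.1.1 hx hy hxy
          rw [Finset.mem_coe, SimpleGraph.mem_edgeFinset, SimpleGraph.mem_edgeSet, linkG_adj]
          refine ⟨?_, ?_, ?_, Or.inl ⟨h1.2, h2.2⟩⟩
          · rw [← hsa]
            exact hclique _ h0.1 _ h1.1 (pick_ne hsT (by decide))
          · rw [← hsa]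
            exact hclique _ h0.1 _ h2.1 (pick_ne hsT (by decide))
          · exact hclique _ h1.1 _ h2.1 (pick_ne hsT (by decide))
        · intro s hs s' hs' heq
          rw [Finset.mem_coe, Finset.mem_filter] at hs hs'
          obtain ⟨hsT, hsa⟩ := hs
          obtain ⟨hs'T, hs'a⟩ := hs'
          rw [Sym2.eq_iff] at heq
          rcases heq with ⟨ha1, ha2⟩ | ⟨ha1, ha2⟩
          · rw [tri_eq_picks (v0 := v0) hsT, tri_eq_picks (v0 := v0) hs'T,
              hsa, hs'a, ha1, ha2]
          · exfalso
            have hc1 := (pick_spec (v0 := v0) (i := 1) hsT).2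
            have hc2 := (pick_spec (v0 := v0) (i := 2) hs'T).2
            rw [ha1] at hc1
            rw [hc1] at hc2
            exact absurd hc2 (by decide)
      have hsup : (univ.filter (fun v => ∃ w, (linkG G χ a).Adj v w)) ⊆
          (univ.filter (fun b => (a, b) ∈ Epair G χ 0 1 2)) ∪
            (univ.filter (fun b => (a, b) ∈ Epair G χ 0 2 1)) := by
        intro v hv
        rw [Finset.mem_filter] at hv
        obtain ⟨-, w, hw⟩ := hv
        rw [linkG_adj] at hw
        obtain ⟨hav, haw, hvw, hcol⟩ := hw
        rw [Finset.mem_union, Finset.mem_filter, Finset.mem_filter]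
        rcases hcol with ⟨hv1, hw2⟩ | ⟨hv2, hw1⟩
        · left
          refine ⟨Finset.mem_univ _, ?_⟩
          rw [Epair, Finset.mem_filter]
          exact ⟨Finset.mem_univ _, haA.2, hv1, hav, w, hw2, haw, hvw⟩
        · right
          refine ⟨Finset.mem_univ _, ?_⟩
          rw [Epair, Finset.mem_filter]
          exact ⟨Finset.mem_univ _, haA.2, hv2, hav, w, hw1, haw, hvw⟩
      calc ((TriRB G χ).filter (fun s => pick v0 χ 0 s = a)).card
          ≤ (linkG G χ a).edgeFinset.card := htri
      _ ≤ (k - 1) * (univ.filter (fun v => ∃ w, (linkG G χ a).Adj v w)).card := by convert hedge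
      _ ≤ (k - 1) * ((univ.filter (fun b => (a, b) ∈ Epair G χ 0 1 2)).card +
            (univ.filter (fun b => (a, b) ∈ Epair G χ 0 2 1)).card) := by
          apply Nat.mul_le_mul_left
          exact le_trans (Finset.card_le_card hsup) (Finset.card_union_le _ _)
    · intro x y hxy
      rw [linkG_adj] at hxy
      rcases hxy.2.2.2 with ⟨hx1, hy2⟩ | ⟨hx2, hy1⟩
      · simp only [hx1, hy2]; decide
      · simp only [hx2, hy1]; decide
  calc ∑ a ∈ A, ((TriRB G χ).filter (fun s => pick v0 χ 0 s = a)).card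
      ≤ ∑ a ∈ A, (k - 1) * ((univ.filter (fun b => (a, b) ∈ Epair G χ 0 1 2)).card +
        (univ.filter (fun b => (a, b) ∈ Epair G χ 0 2 1)).card) := Finset.sum_le_sum hbound
  _ = (k - 1) * ((Epair G χ 0 1 2).card + (Epair G χ 0 2 1).card) := by
      rw [← Finset.mul_sum]
      congr 1
      rw [Finset.sum_add_distrib, hd01 1 2, hd01 2 1]

end StepA

section StepB

def bipHost (m : ℕ) (P : Fin m → Fin m → Prop) : SimpleGraph (Fin m ⊕ Fin m) where
  Adj u v := (∃ i j, u = Sum.inl i ∧ v = Sum.inr j ∧ P i j) ∨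
    (∃ i j, u = Sum.inr j ∧ v = Sum.inl i ∧ P i j)
  symm := by
    constructor
    rintro u v (⟨i, j, rfl, rfl, h⟩ | ⟨i, j, rfl, rfl, h⟩)
    · exact Or.inr ⟨i, j, rfl, rfl, h⟩
    · exact Or.inl ⟨i, j, rfl, rfl, h⟩
  loopless := by
    constructor
    rintro u (⟨i, j, rfl, h2, -⟩ | ⟨i, j, rfl, h2, -⟩) <;> simp at h2

lemma bipHost_adj {m : ℕ} {P : Fin m → Fin m → Prop} {u v : Fin m ⊕ Fin m} :
    (bipHost m P).Adj u v ↔ ((∃ i j, u = Sum.inl i ∧ v = Sum.inr j ∧ P i j) ∨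
      (∃ i j, u = Sum.inr j ∧ v = Sum.inl i ∧ P i j)) := Iff.rfl

lemma bipHost_isLeft {m : ℕ} (P : Fin m → Fin m → Prop) :
    ∀ u v, (bipHost m P).Adj u v → u.isLeft ≠ v.isLeft := by
  rintro u v (⟨i, j, rfl, rfl, -⟩ | ⟨i, j, rfl, rfl, -⟩) <;> simp

lemma bipHost_edgecard {m : ℕ} (P : Fin m → Fin m → Prop) :
    (bipHost m P).edgeSet.ncard =
      (univ.filter (fun p : Fin m × Fin m => P p.1 p.2)).card := by
  classical
  rw [← SimpleGraph.coe_edgeFinset, Set.ncard_coe_finset]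
  symm
  apply Finset.card_bij (fun p _ => s(Sum.inl p.1, (Sum.inr p.2 : Fin m ⊕ Fin m)))
  · intro p hp
    rw [Finset.mem_filter] at hp
    rw [SimpleGraph.mem_edgeFinset, SimpleGraph.mem_edgeSet]
    exact Or.inl ⟨p.1, p.2, rfl, rfl, hp.2⟩
  · intro p hp q hq h
    rw [Sym2.eq_iff] at h
    rcases h with ⟨h1, h2⟩ | ⟨h1, h2⟩
    · ext
      · exact congrArg Fin.val (Sum.inl.inj h1)
      · exact congrArg Fin.val (Sum.inr.inj h2)
    · simp at h1
  · intro e he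
    induction e with
    | h u v =>
      rw [SimpleGraph.mem_edgeFinset, SimpleGraph.mem_edgeSet] at he
      rcases he with ⟨i, j, rfl, rfl, h⟩ | ⟨i, j, rfl, rfl, h⟩
      · exact ⟨(i, j), Finset.mem_filter.mpr ⟨Finset.mem_univ _, h⟩, rfl⟩
      · exact ⟨(i, j), Finset.mem_filter.mpr ⟨Finset.mem_univ _, h⟩, Sym2.eq_swap⟩

lemma stepB {n k m : ℕ} (hn : 3 ≤ n) (hm : 0 < m) (hk : 2 ≤ k) (G : SimpleGraph (Fin n))
    (hG : CycleFree G (2 * k + 1)) (χ : Fin n → Fin 3) (γ1 γ2 γ3 : Fin 3)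
    (h12 : γ1 ≠ γ2) (h13 : γ1 ≠ γ3) (h23 : γ2 ≠ γ3)
    (hc1 : (univ.filter (fun x => χ x = γ1)).card ≤ m)
    (hc2 : (univ.filter (fun x => χ x = γ2)).card ≤ m) :
    (Epair G χ γ1 γ2 γ3).card ≤ exBipCycle m m (2 * k) := by
  classical
  set v0 : Fin n := ⟨0, by omega⟩ with hv0
  set A1 : Finset (Fin n) := univ.filter (fun x => χ x = γ1) with hA1
  set B1 : Finset (Fin n) := univ.filter (fun x => χ x = γ2) with hB1
  set eA := A1.orderIsoOfFin rfl with heA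
  set eB := B1.orderIsoOfFin rfl with heB
  set P : Fin m → Fin m → Prop := fun i j =>
    ∃ (hi : (i : ℕ) < A1.card) (hj : (j : ℕ) < B1.card),
      ((eA ⟨(i : ℕ), hi⟩ : Fin n), (eB ⟨(j : ℕ), hj⟩ : Fin n)) ∈ Epair G χ γ1 γ2 γ3
    with hP
  set g : Fin m ⊕ Fin m → Fin n := fun u => Sum.elim
    (fun (i : Fin m) => if h : (i : ℕ) < A1.card then (eA ⟨(i : ℕ), h⟩ : Fin n) else v0)
    (fun (j : Fin m) => if h : (j : ℕ) < B1.card then (eB ⟨(j : ℕ), h⟩ : Fin n) else v0) u with hg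
  have hgA : ∀ (i : Fin m) (h : (i : ℕ) < A1.card), g (Sum.inl i) = (eA ⟨(i : ℕ), h⟩ : Fin n) := by
    intro i h; rw [hg]; simp only [Sum.elim_inl]; rw [dif_pos h]
  have hgB : ∀ (j : Fin m) (h : (j : ℕ) < B1.card), g (Sum.inr j) = (eB ⟨(j : ℕ), h⟩ : Fin n) := by
    intro j h; rw [hg]; simp only [Sum.elim_inr]; rw [dif_pos h]
  have hχA : ∀ z, χ (eA z : Fin n) = γ1 := by
    intro z
    have h2 : (eA z : Fin n) ∈ univ.filter (fun x => χ x = γ1) := hA1 ▸ (eA z).2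
    rw [Finset.mem_filter] at h2
    exact h2.2
  have hχB : ∀ z, χ (eB z : Fin n) = γ2 := by
    intro z
    have h2 : (eB z : Fin n) ∈ univ.filter (fun x => χ x = γ2) := hB1 ▸ (eB z).2
    rw [Finset.mem_filter] at h2
    exact h2.2
  -- adjacency transfer
  have hGadj : ∀ x y, (bipHost m P).Adj x y → G.Adj (g x) (g y) := by
    rintro x y (⟨i, j, rfl, rfl, hi, hj, hmemE⟩ | ⟨i, j, rfl, rfl, hi, hj, hmemE⟩)
    · rw [Epair, Finset.mem_filter] at hmemE
      rw [hgA i hi, hgB j hj]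
      exact hmemE.2.2.2.1
    · rw [Epair, Finset.mem_filter] at hmemE
      rw [hgA i hi, hgB j hj]
      exact hmemE.2.2.2.1.symm
  -- cycle freeness of the host
  have hcf : CycleFree (bipHost m P) (2 * k) := by
    intro v c hc hclen
    obtain ⟨l, hlne, hllen, hlnd, hlch, hlwrap, -⟩ := list_of_cycle c hc
    rw [hclen] at hllen
    -- every member of l is in some adjacency
    have hadjx : ∀ x ∈ l, ∃ y, (bipHost m P).Adj x y := by
      intro x hx
      obtain ⟨⟨i, hi⟩, rfl⟩ := List.mem_iff_get.mp hx
      by_cases hlast : i + 1 < l.length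
      · exact ⟨l.get ⟨i + 1, by omega⟩, List.isChain_iff_getElem.mp hlch i (by omega)⟩
      · have hieq : i = l.length - 1 := by omega
        have hxl : l.get ⟨i, hi⟩ = l.getLast hlne := by
          subst hieq
          rw [List.getLast_eq_getElem]
          rfl
        rw [hxl]
        exact ⟨l.head hlne, hlwrap⟩
    have hwd : ∀ x ∈ l, (∃ i : Fin m, x = Sum.inl i ∧ (i : ℕ) < A1.card) ∨
        (∃ j : Fin m, x = Sum.inr j ∧ (j : ℕ) < B1.card) := by
      intro x hx
      obtain ⟨y, hxy⟩ := hadjx x hx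
      rcases hxy with ⟨i, j, hx1, -, hi, hj, -⟩ | ⟨i, j, hx1, -, hi, hj, -⟩
      · exact Or.inl ⟨i, hx1, hi⟩
      · exact Or.inr ⟨j, hx1, hj⟩
    have hgwd : ∀ x ∈ l, (χ (g x) = γ1 ∨ χ (g x) = γ2) := by
      intro x hx
      rcases hwd x hx with ⟨i, rfl, hi⟩ | ⟨j, rfl, hj⟩
      · rw [hgA i hi]; exact Or.inl (hχA _)
      · rw [hgB j hj]; exact Or.inr (hχB _)
    have hginj : ∀ x ∈ l, ∀ y ∈ l, g x = g y → x = y := by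
      intro x hx y hy hxy
      rcases hwd x hx with ⟨i, rfl, hi⟩ | ⟨j, rfl, hj⟩ <;>
        rcases hwd y hy with ⟨i', rfl, hi'⟩ | ⟨j', rfl, hj'⟩
      · rw [hgA i hi, hgA i' hi'] at hxy
        have h7 := eA.injective (Subtype.ext hxy)
        have h8 : (i : ℕ) = (i' : ℕ) := by simpa using congrArg Fin.val h7
        exact congrArg Sum.inl (Fin.ext h8)
      · rw [hgA i hi, hgB j' hj'] at hxy
        exact absurd (by rw [← hχA ⟨(i:ℕ), hi⟩, hxy, hχB]) h12
      · rw [hgB j hj, hgA i' hi'] at hxy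
        exact absurd (by rw [← hχA ⟨(i':ℕ), hi'⟩, ← hxy, hχB]) h12
      · rw [hgB j hj, hgB j' hj'] at hxy
        have h7 := eB.injective (Subtype.ext hxy)
        have h8 : (j : ℕ) = (j' : ℕ) := by simpa using congrArg Fin.val h7
        exact congrArg Sum.inr (Fin.ext h8)
    set L := l.map g with hL
    have hLne : L ≠ [] := by
      rw [hL]; simp [hlne]
    have hLlen : L.length = 2 * k := by rw [hL, List.length_map, hllen]
    have hLnd : L.Nodup := (List.Nodup.map_on hginj) hlnd
    have hLch : L.Chain' G.Adj := by
      rw [hL, List.Chain', List.isChain_map]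
      exact hlch.imp (fun a b h => hGadj a b h)
    have hLlast : L.getLast hLne = g (l.getLast hlne) := by
      have h1 : L.getLast? = (l.getLast?).map g := List.getLast?_map
      rw [List.getLast?_eq_getLast hLne, List.getLast?_eq_getLast hlne] at h1
      simpa using h1
    have hLhead : L.head hLne = g (l.head hlne) := by
      have h1 : L.head? = (l.head?).map g := List.head?_map
      rw [List.head?_eq_head hLne, List.head?_eq_head hlne] at h1
      simpa using h1
    -- get the triangle witness on the wrap edge
    have hc0 : ∃ c0, χ c0 = γ3 ∧ G.Adj (g (l.getLast hlne)) c0 ∧ G.Adj (g (l.head hlne)) c0 := by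
      rcases hlwrap with ⟨i, j, hx1, hy1, hi, hj, hmemE⟩ | ⟨i, j, hx1, hy1, hi, hj, hmemE⟩
      · rw [Epair, Finset.mem_filter] at hmemE
        obtain ⟨-, -, -, -, c0, hcc, hc1', hc2'⟩ := hmemE
        refine ⟨c0, hcc, ?_, ?_⟩
        · rw [hx1, hgA i hi]; exact hc1'
        · rw [hy1, hgB j hj]; exact hc2'
      · rw [Epair, Finset.mem_filter] at hmemE
        obtain ⟨-, -, -, -, c0, hcc, hc1', hc2'⟩ := hmemE
        refine ⟨c0, hcc, ?_, ?_⟩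
        · rw [hx1, hgB j hj]; exact hc2'
        · rw [hy1, hgA i hi]; exact hc1'
    obtain ⟨c0, hc0c, hc0last, hc0head⟩ := hc0
    have hc0nL : c0 ∉ L := by
      intro hmem
      rw [hL, List.mem_map] at hmem
      obtain ⟨x, hx, rfl⟩ := hmem
      rcases hgwd x hx with h | h
      · exact h13 (by rw [← hc0c, h])
      · exact h23 (by rw [← hc0c, h])
    -- the (2k+1)-cycle list
    have hM3 : 3 ≤ (c0 :: L).length := by simp [hLlen]; omega
    obtain ⟨w, cc, hcc, hcclen⟩ := exists_cycle_of_list G (c0 :: L) hM3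
      (by rw [List.nodup_cons]; exact ⟨hc0nL, hLnd⟩)
      (by
        rw [List.Chain', List.isChain_cons]
        constructor
        · intro y hy
          rw [List.head?_eq_head hLne] at hy
          rw [← Option.some_inj.mp hy, hLhead]
          exact hc0head.symm
        · exact hLch)
      (by simp)
      (by
        rw [List.getLast_cons hLne, hLlast]
        have hh : (c0 :: L).head (by simp) = c0 := rfl
        rw [hh]
        exact hc0last)
    exact hG w cc hcc (by rw [hcclen]; simp [hLlen])
  -- membership in the sSup set and conclusion
  have hbdd : BddAbove {e | ∃ G' : SimpleGraph (Fin m ⊕ Fin m),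
      (∀ u v, G'.Adj u v → u.isLeft ≠ v.isLeft) ∧ CycleFree G' (2 * k) ∧
        G'.edgeSet.ncard = e} := by
    refine ⟨Fintype.card (Sym2 (Fin m ⊕ Fin m)), ?_⟩
    rintro e ⟨G', -, -, he⟩
    rw [← he]
    calc G'.edgeSet.ncard ≤ (Set.univ : Set (Sym2 (Fin m ⊕ Fin m))).ncard :=
          Set.ncard_le_ncard (Set.subset_univ _) Set.finite_univ
    _ = _ := by rw [Set.ncard_univ, Nat.card_eq_fintype_card]
  have hle : (bipHost m P).edgeSet.ncard ≤ exBipCycle m m (2 * k) := by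
    apply le_csSup hbdd
    exact ⟨bipHost m P, bipHost_isLeft P, hcf, rfl⟩
  -- Epair card equals host edge count
  have hcount : (univ.filter (fun p : Fin m × Fin m => P p.1 p.2)).card =
      (Epair G χ γ1 γ2 γ3).card := by
    apply Finset.card_bij (fun p _ => (g (Sum.inl p.1), g (Sum.inr p.2)))
    · intro p hp
      rw [Finset.mem_filter] at hp
      obtain ⟨-, hi, hj, hmemE⟩ := hp
      rw [hgA _ hi, hgB _ hj]
      exact hmemE
    · intro p hp p' hp' heq
      rw [Finset.mem_filter] at hp hp'
      obtain ⟨-, hi, hj, -⟩ := hp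
      obtain ⟨-, hi', hj', -⟩ := hp'
      rw [hgA _ hi, hgB _ hj, hgA _ hi', hgB _ hj'] at heq
      have h1 := congrArg Prod.fst heq
      have h2 := congrArg Prod.snd heq
      simp only at h1 h2
      have e1 := eA.injective (Subtype.ext h1)
      have e2 := eB.injective (Subtype.ext h2)
      have w1 : (p.1 : ℕ) = (p'.1 : ℕ) := by simpa using congrArg Fin.val e1
      have w2 : (p.2 : ℕ) = (p'.2 : ℕ) := by simpa using congrArg Fin.val e2
      ext
      · exact w1
      · exact w2
    · intro q hq
      have hqA : q.1 ∈ A1 := by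
        rw [Epair, Finset.mem_filter] at hq
        rw [hA1, Finset.mem_filter]
        exact ⟨Finset.mem_univ _, hq.2.1⟩
      have hqB : q.2 ∈ B1 := by
        rw [Epair, Finset.mem_filter] at hq
        rw [hB1, Finset.mem_filter]
        exact ⟨Finset.mem_univ _, hq.2.2.1⟩
      set zA := eA.symm ⟨q.1, hqA⟩ with hzA
      set zB := eB.symm ⟨q.2, hqB⟩ with hzB
      have hvalA : (eA ⟨(zA : ℕ), zA.isLt⟩ : Fin n) = q.1 := by
        have h3 := eA.apply_symm_apply ⟨q.1, hqA⟩
        rw [← hzA] at h3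
        exact congrArg Subtype.val h3
      have hvalB : (eB ⟨(zB : ℕ), zB.isLt⟩ : Fin n) = q.2 := by
        have h3 := eB.apply_symm_apply ⟨q.2, hqB⟩
        rw [← hzB] at h3
        exact congrArg Subtype.val h3
      refine ⟨(⟨(zA : ℕ), lt_of_lt_of_le zA.isLt hc1⟩,
        ⟨(zB : ℕ), lt_of_lt_of_le zB.isLt hc2⟩), ?_, ?_⟩
      · rw [Finset.mem_filter]
        refine ⟨Finset.mem_univ _, zA.isLt, zB.isLt, ?_⟩
        show ((eA ⟨(zA : ℕ), zA.isLt⟩ : Fin n), (eB ⟨(zB : ℕ), zB.isLt⟩ : Fin n)) ∈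
          Epair G χ γ1 γ2 γ3
        rw [hvalA, hvalB]
        exact hq
      · rw [hgA _ zA.isLt, hgB _ zB.isLt]
        show ((eA ⟨(zA : ℕ), zA.isLt⟩ : Fin n), (eB ⟨(zB : ℕ), zB.isLt⟩ : Fin n)) = q
        rw [hvalA, hvalB]
  calc (Epair G χ γ1 γ2 γ3).card
      = (univ.filter (fun p : Fin m × Fin m => P p.1 p.2)).card := hcount.symm
  _ = (bipHost m P).edgeSet.ncard := by
        rw [bipHost_edgecard P]
        congr
  _ ≤ exBipCycle m m (2 * k) := hle

end StepB


end GyLi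

/-- `t_{2k+1}(n) ≤ 9(k-1)·ex(⌈n/3⌉, ⌈n/3⌉, C_{2k})` for `k ≥ 2`. -/
theorem stmt12 (n k : ℕ) (hk : 2 ≤ k) :
    triMax n (2 * k + 1) ≤
      9 * (k - 1) * exBipCycle ((n + 2) / 3) ((n + 2) / 3) (2 * k) := by
  classical
  apply csSup_le'
  rintro t ⟨G, hG, rfl⟩
  have hteq : (G.cliqueSet 3).ncard = (G.cliqueFinset 3).card := by
    rw [← SimpleGraph.coe_cliqueFinset, Set.ncard_coe_finset]
  rw [hteq]
  by_cases hn : 3 ≤ n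
  · set m := (n + 2) / 3 with hm'
    set X := exBipCycle m m (2 * k) with hX
    have hm : 0 < m := by omega
    obtain ⟨χ, hχfib, hχrb⟩ := GyLi.exists_good_coloring hn G
    have hRB9 : 2 * (G.cliqueFinset 3).card ≤ 9 * (GyLi.TriRB G χ).card := hχrb
    have hA := GyLi.stepA hn hk G hG χ
    have hB1 := GyLi.stepB hn hm hk G hG χ 0 1 2 (by decide) (by decide) (by decide)
      (hχfib 0) (hχfib 1)
    have hB2 := GyLi.stepB hn hm hk G hG χ 0 2 1 (by decide) (by decide) (by decide)
      (hχfib 0) (hχfib 2)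
    have hE : (GyLi.Epair G χ 0 1 2).card + (GyLi.Epair G χ 0 2 1).card ≤ 2 * X := by
      rw [hX]; omega
    have h9 : 9 * (GyLi.TriRB G χ).card ≤ 9 * ((k - 1) * (2 * X)) :=
      Nat.mul_le_mul_left 9 (le_trans hA (Nat.mul_le_mul_left _ hE))
    have hfin : 2 * (G.cliqueFinset 3).card ≤ 9 * ((k - 1) * (2 * X)) :=
      le_trans hRB9 h9
    have hring : 9 * ((k - 1) * (2 * X)) = 2 * (9 * (k - 1) * X) := by ring
    rw [hring] at hfin
    omega
  · have hempty : G.cliqueFinset 3 = ∅ := by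
      rw [Finset.eq_empty_iff_forall_notMem]
      intro s hs
      have h3 : s.card = 3 := (SimpleGraph.mem_cliqueFinset_iff.mp hs).2
      have hle := Finset.card_le_card (Finset.subset_univ s)
      rw [h3, Finset.card_univ, Fintype.card_fin] at hle
      omega
    rw [hempty]
    simp
end

section
/- For k ≥ 2, ex₃(n, C^{(3)}_{2k}) ≤ t_{2k}(n) + ex(n, C_{2k}). -/
/-- The hypergraph `H` contains a Berge cycle of length `ℓ`. -/
def HasBergeCycle {V : Type*} (H : Finset (Finset V)) (ℓ : ℕ) : Prop :=
  ∃ (f : Fin ℓ → Finset V) (v : Fin ℓ → V),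
    Function.Injective f ∧ Function.Injective v ∧
    (∀ i, f i ∈ H) ∧ ∀ i : Fin ℓ, v i ∈ f i ∧ v ⟨(↑i + 1) % ℓ, Nat.mod_lt _ i.pos⟩ ∈ f i

/-- The Turán number `ex(n, C_ℓ)`. -/
noncomputable def exCycle (n ℓ : ℕ) : ℕ :=
  sSup {m | ∃ G : SimpleGraph (Fin n), CycleFree G ℓ ∧ G.edgeSet.ncard = m}

/-- `ex₃(n, C^{(3)}_ℓ)`: the maximum number of hyperedges of a 3-uniform hypergraph on
`n` vertices with no Berge cycle of length `ℓ`. -/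
noncomputable def ex3Berge (n ℓ : ℕ) : ℕ :=
  sSup {m | ∃ H : Finset (Finset (Fin n)),
    (∀ E ∈ H, E.card = 3) ∧ ¬ HasBergeCycle H ℓ ∧ H.card = m}


open Finset in
lemma pair_eq_pair_iff' {α : Type*} [DecidableEq α] {x y z w : α} :
    ({x, y} : Finset α) = {z, w} ↔ x = z ∧ y = w ∨ x = w ∧ y = z := by
  constructor
  · intro h
    have h2 : ({x, y} : Set α) = {z, w} := by
      have := Finset.coe_inj.mpr h
      simpa using this
    exact Set.pair_eq_pair_iff.mp h2
  · rintro (⟨rfl, rfl⟩ | ⟨rfl, rfl⟩)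
    · rfl
    · exact Finset.pair_comm _ _

lemma walk_support_getElem {V : Type*} {G : SimpleGraph V} {u v : V}
    (p : G.Walk u v) (i : ℕ) (h : i < p.support.length) :
    p.support[i] = p.getVert i := by
  induction p generalizing i with
  | nil =>
    simp only [SimpleGraph.Walk.support_nil, List.length_singleton] at h
    interval_cases i
    simp [SimpleGraph.Walk.getVert]
  | cons hadj q ih =>
    cases i with
    | zero => simp [SimpleGraph.Walk.getVert]
    | succ i =>
      simp only [SimpleGraph.Walk.support_cons, List.getElem_cons_succ,
        SimpleGraph.Walk.getVert_cons_succ]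
      exact ih i (by simpa [SimpleGraph.Walk.support_cons] using h)

lemma cycle_getVert_inj {V : Type*} {G : SimpleGraph V} {u : V} {c : G.Walk u u}
    (hc : c.IsCycle) {i j : ℕ} (hi : i < c.length) (hj : j < c.length)
    (hij : c.getVert i = c.getVert j) : i = j := by
  have hnd := hc.support_nodup
  have hlen := c.length_support
  have h3 := hc.three_le_length
  have htl : c.support.tail.length = c.length := by
    simp [List.length_tail, hlen]
  have hkey : ∀ m (hm : m < c.length),
      c.support.tail[m]'(by omega) = c.getVert (m + 1) := by
    intro m hm
    rw [List.getElem_tail, walk_support_getElem c (m + 1) (by omega)]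
  rcases Nat.eq_zero_or_pos i with rfl | hi0
  · rcases Nat.eq_zero_or_pos j with rfl | hj0
    · rfl
    · exfalso
      have h1 : c.support.tail[c.length - 1]'(by omega) = c.getVert c.length := by
        rw [hkey _ (by omega)]
        congr 1
        omega
      have h2 : c.support.tail[j - 1]'(by omega) = c.getVert j := by
        rw [hkey _ (by omega)]
        congr 1
        omega
      have h4 : c.getVert j = c.getVert c.length := by
        rw [c.getVert_length, ← hij]
        exact c.getVert_zero
      have := (hnd.getElem_inj_iff (hi := by omega) (hj := by omega)).mp
        (h2.trans (h4.trans h1.symm))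
      omega
  · rcases Nat.eq_zero_or_pos j with rfl | hj0
    · exfalso
      have h1 : c.support.tail[c.length - 1]'(by omega) = c.getVert c.length := by
        rw [hkey _ (by omega)]
        congr 1
        omega
      have h2 : c.support.tail[i - 1]'(by omega) = c.getVert i := by
        rw [hkey _ (by omega)]
        congr 1
        omega
      have h4 : c.getVert i = c.getVert c.length := by
        rw [c.getVert_length, hij]
        exact c.getVert_zero
      have := (hnd.getElem_inj_iff (hi := by omega) (hj := by omega)).mp
        (h2.trans (h4.trans h1.symm))
      omega
    · have h1 : c.support.tail[i - 1]'(by omega) = c.getVert i := by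
        rw [hkey _ (by omega)]; congr 1; omega
      have h2 : c.support.tail[j - 1]'(by omega) = c.getVert j := by
        rw [hkey _ (by omega)]; congr 1; omega
      have := (hnd.getElem_inj_iff (hi := by omega) (hj := by omega)).mp
        (h1.trans (hij.trans h2.symm))
      omega


lemma select {V : Type*} [DecidableEq V] (H : Finset (Finset V)) :
    (∀ e ∈ H, e.card = 3) →
    ∃ (B R P : Finset (Finset V)) (ψ : Finset V → Finset V),
      B ∪ R = H ∧ Disjoint B R ∧
      (∀ p ∈ P, p.card = 2) ∧
      Set.InjOn ψ ↑P ∧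
      (∀ p ∈ P, ψ p ∈ B ∧ p ⊆ ψ p) ∧
      P.image ψ = B ∧
      (∀ r ∈ R, ∀ x ∈ r, ∀ y ∈ r, x ≠ y → ({x, y} : Finset V) ∈ P) := by
  classical
  induction H using Finset.induction_on with
  | empty =>
    intro _
    exact ⟨∅, ∅, ∅, id, by simp, by simp, by simp, by simp, by simp, by simp, by simp⟩
  | @insert h H' hh ih =>
    intro h3
    obtain ⟨B, R, P, ψ, hBR, hdis, hP2, hinj, hψ, him, hred⟩ :=
      ih fun e he => h3 e (Finset.mem_insert_of_mem he)
    have hhB : h ∉ B := fun hc => hh (hBR ▸ Finset.mem_union_left _ hc)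
    have hhR : h ∉ R := fun hc => hh (hBR ▸ Finset.mem_union_right _ hc)
    obtain ⟨a, b, c, hab, hac, hbc, rfl⟩ :=
      Finset.card_eq_three.mp (h3 h (Finset.mem_insert_self _ _))
    by_cases hall : ({a, b} : Finset V) ∈ P ∧ ({a, c} : Finset V) ∈ P ∧
        ({b, c} : Finset V) ∈ P
    · refine ⟨B, insert {a, b, c} R, P, ψ, ?_, ?_, hP2, hinj, hψ, him, ?_⟩
      · rw [Finset.union_insert, hBR]
      · exact Finset.disjoint_insert_right.mpr ⟨hhB, hdis⟩
      · intro r hr x hx y hy hxy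
        rcases Finset.mem_insert.mp hr with rfl | hr
        · simp only [Finset.mem_insert, Finset.mem_singleton] at hx hy
          obtain ⟨h1, h2, h3'⟩ := hall
          rcases hx with rfl | rfl | rfl <;> rcases hy with rfl | rfl | rfl <;>
            first
              | exact absurd rfl hxy
              | assumption
              | (rw [Finset.pair_comm]; assumption)
        · exact hred r hr x hx y hy hxy
    · obtain ⟨p, hpP, hp2, hpsub⟩ :
          ∃ p, p ∉ P ∧ p.card = 2 ∧ p ⊆ ({a, b, c} : Finset V) := by
        by_cases h1 : ({a, b} : Finset V) ∈ P
        · by_cases h2 : ({a, c} : Finset V) ∈ P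
          · refine ⟨{b, c}, fun hc => hall ⟨h1, h2, hc⟩, Finset.card_pair hbc, ?_⟩
            intro z hz; simp only [Finset.mem_insert, Finset.mem_singleton] at hz ⊢; tauto
          · refine ⟨{a, c}, h2, Finset.card_pair hac, ?_⟩
            intro z hz; simp only [Finset.mem_insert, Finset.mem_singleton] at hz ⊢; tauto
        · refine ⟨{a, b}, h1, Finset.card_pair hab, ?_⟩
          intro z hz; simp only [Finset.mem_insert, Finset.mem_singleton] at hz ⊢; tauto
      refine ⟨insert {a, b, c} B, R, insert p P,
        fun q => if q = p then {a, b, c} else ψ q, ?_, ?_, ?_, ?_, ?_, ?_, ?_⟩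
      · rw [Finset.insert_union, hBR]
      · exact Finset.disjoint_insert_left.mpr ⟨hhR, hdis⟩
      · intro q hq
        rcases Finset.mem_insert.mp hq with rfl | hq
        · exact hp2
        · exact hP2 q hq
      · intro q₁ hq₁ q₂ hq₂ he
        dsimp only at he
        simp only [Finset.coe_insert, Set.mem_insert_iff, Finset.mem_coe] at hq₁ hq₂
        rcases hq₁ with rfl | hq₁ <;> rcases hq₂ with rfl | hq₂
        · rfl
        · exfalso
          have n2 : q₂ ≠ q₁ := fun hc => hpP (hc ▸ hq₂)
          rw [if_pos rfl, if_neg n2] at he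
          exact hhB (he ▸ (hψ q₂ hq₂).1)
        · exfalso
          have n1 : q₁ ≠ q₂ := fun hc => hpP (hc ▸ hq₁)
          rw [if_pos rfl, if_neg n1] at he
          exact hhB (he ▸ (hψ q₁ hq₁).1)
        · have n1 : q₁ ≠ p := fun hc => hpP (hc ▸ hq₁)
          have n2 : q₂ ≠ p := fun hc => hpP (hc ▸ hq₂)
          rw [if_neg n1, if_neg n2] at he
          exact hinj hq₁ hq₂ he
      · intro q hq
        dsimp only
        rcases Finset.mem_insert.mp hq with rfl | hq
        · rw [if_pos rfl]
          exact ⟨Finset.mem_insert_self _ _, hpsub⟩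
        · have n1 : q ≠ p := fun hc => hpP (hc ▸ hq)
          rw [if_neg n1]
          exact ⟨Finset.mem_insert_of_mem (hψ q hq).1, (hψ q hq).2⟩
      · rw [Finset.image_insert, if_pos rfl]
        congr 1
        refine (Finset.image_congr ?_).trans him
        intro q hq
        simp only [Finset.mem_coe] at hq
        dsimp only
        rw [if_neg (show q ≠ p from fun hc => hpP (hc ▸ hq))]
      · intro r hr x hx y hy hxy
        exact Finset.mem_insert_of_mem (hred r hr x hx y hy hxy)

/-- `ex₃(n, C^{(3)}_{2k}) ≤ t_{2k}(n) + ex(n, C_{2k})` for `k ≥ 2`. -/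
theorem stmt13 (n k : ℕ) (hk : 2 ≤ k) :
    ex3Berge n (2 * k) ≤ triMax n (2 * k) + exCycle n (2 * k) := by
  classical
  have hℓ4 : 4 ≤ 2 * k := by omega
  set ℓ := 2 * k with hℓdef
  -- bounds
  have bddE : BddAbove {m | ∃ G : SimpleGraph (Fin n), CycleFree G ℓ ∧ G.edgeSet.ncard = m} := by
    refine ⟨Fintype.card (Sym2 (Fin n)), ?_⟩
    rintro m ⟨G, -, rfl⟩
    calc G.edgeSet.ncard ≤ (Set.univ : Set (Sym2 (Fin n))).ncard :=
          Set.ncard_le_ncard (Set.subset_univ _) Set.finite_univ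
      _ = _ := by rw [Set.ncard_univ, Nat.card_eq_fintype_card]
  have bddT : BddAbove {m | ∃ G : SimpleGraph (Fin n), CycleFree G ℓ ∧ (G.cliqueSet 3).ncard = m} := by
    refine ⟨Fintype.card (Finset (Fin n)), ?_⟩
    rintro m ⟨G, -, rfl⟩
    calc (G.cliqueSet 3).ncard ≤ (Set.univ : Set (Finset (Fin n))).ncard :=
          Set.ncard_le_ncard (Set.subset_univ _) Set.finite_univ
      _ = _ := by rw [Set.ncard_univ, Nat.card_eq_fintype_card]
  rw [ex3Berge]
  apply csSup_le
  · refine ⟨0, ∅, by simp, ?_, by simp⟩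
    rintro ⟨f, v, -, -, hf, -⟩
    exact absurd (hf ⟨0, by omega⟩) (Finset.notMem_empty _)
  rintro m ⟨H, h3, hNB, rfl⟩
  obtain ⟨B, R, P, ψ, hBR, hdis, hP2, hinj, hψ, him, hred⟩ := select H h3
  set G : SimpleGraph (Fin n) :=
    { Adj := fun x y => x ≠ y ∧ ({x, y} : Finset (Fin n)) ∈ P
      symm := ⟨by
        rintro x y ⟨h1, h2⟩
        exact ⟨h1.symm, by rwa [Finset.pair_comm]⟩⟩
      loopless := ⟨fun x h => h.1 rfl⟩ } with hGdef
  have hGadj : ∀ x y, G.Adj x y ↔ x ≠ y ∧ ({x, y} : Finset (Fin n)) ∈ P := fun x y => Iff.rfl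
  -- Cycle-freeness
  have hCF : CycleFree G ℓ := by
    intro u c hcyc hlen
    have hgv : ∀ i : ℕ, i < ℓ → c.getVert ((i + 1) % ℓ) = c.getVert (i + 1) := by
      intro i hi
      rcases Nat.lt_or_ge (i + 1) ℓ with h | h
      · rw [Nat.mod_eq_of_lt h]
      · have h1 : i + 1 = ℓ := by omega
        rw [h1, Nat.mod_self, c.getVert_zero, ← hlen, c.getVert_length]
    have hadj : ∀ i : ℕ, i < ℓ →
        ({c.getVert i, c.getVert (i + 1)} : Finset (Fin n)) ∈ P := by
      intro i hi
      exact ((hGadj _ _).mp (c.adj_getVert_succ (by omega))).2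
    have hvinj : ∀ i j : ℕ, i < ℓ → j < ℓ → c.getVert i = c.getVert j → i = j := by
      intro i j hi hj hij
      exact cycle_getVert_inj hcyc (by omega) (by omega) hij
    apply hNB
    refine ⟨fun i => ψ {c.getVert ↑i, c.getVert (↑i + 1)}, fun i => c.getVert ↑i,
      ?_, ?_, ?_, ?_⟩
    · intro i j he
      have hmi := hadj i i.isLt
      have hmj := hadj j j.isLt
      have hpq := hinj (Finset.mem_coe.mpr hmi) (Finset.mem_coe.mpr hmj) he
      rcases pair_eq_pair_iff'.mp hpq with ⟨h1, _⟩ | ⟨h1, h2⟩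
      · exact Fin.ext (hvinj _ _ i.isLt j.isLt h1)
      · exfalso
        rw [← hgv j j.isLt] at h1
        rw [← hgv i i.isLt] at h2
        have e1 : (i : ℕ) = (↑j + 1) % ℓ :=
          hvinj _ _ i.isLt (Nat.mod_lt _ (by omega)) h1
        have e2 : ((i : ℕ) + 1) % ℓ = (j : ℕ) :=
          hvinj _ _ (Nat.mod_lt _ (by omega)) j.isLt h2
        have hi := i.isLt
        have hj := j.isLt
        rcases Nat.lt_or_ge ((i : ℕ) + 1) ℓ with hc1 | hc1 <;>
          rcases Nat.lt_or_ge ((j : ℕ) + 1) ℓ with hc2 | hc2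
        · rw [Nat.mod_eq_of_lt hc1] at e2
          rw [Nat.mod_eq_of_lt hc2] at e1
          omega
        · have : (j : ℕ) + 1 = ℓ := by omega
          rw [this, Nat.mod_self] at e1
          rw [Nat.mod_eq_of_lt hc1] at e2
          omega
        · have : (i : ℕ) + 1 = ℓ := by omega
          rw [this, Nat.mod_self] at e2
          rw [Nat.mod_eq_of_lt hc2] at e1
          omega
        · rw [show (j : ℕ) + 1 = ℓ by omega, Nat.mod_self] at e1
          rw [show (i : ℕ) + 1 = ℓ by omega, Nat.mod_self] at e2
          omega
    · intro i j he
      exact Fin.ext (hvinj _ _ i.isLt j.isLt he)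
    · intro i
      have := (hψ _ (hadj i i.isLt)).1
      exact hBR ▸ Finset.mem_union_left _ this
    · intro i
      constructor
      · exact (hψ _ (hadj i i.isLt)).2 (Finset.mem_insert_self _ _)
      · show c.getVert ((↑i + 1) % ℓ) ∈ _
        rw [hgv i i.isLt]
        exact (hψ _ (hadj i i.isLt)).2
          (Finset.mem_insert_of_mem (Finset.mem_singleton_self _))
  -- edge count
  have hedge : G.edgeSet.ncard = P.card := by
    set F : Sym2 (Fin n) → Finset (Fin n) :=
      Sym2.lift ⟨fun x y => ({x, y} : Finset (Fin n)), fun x y => Finset.pair_comm x y⟩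
      with hFdef
    have himg : F '' G.edgeSet = ↑P := by
      ext p
      constructor
      · rintro ⟨e, he, rfl⟩
        induction e with
        | _ x y =>
          rw [SimpleGraph.mem_edgeSet, hGadj] at he
          exact Finset.mem_coe.mpr he.2
      · intro hp
        rw [Finset.mem_coe] at hp
        obtain ⟨x, y, hxy, rfl⟩ := Finset.card_eq_two.mp (hP2 p hp)
        exact ⟨s(x, y), (G.mem_edgeSet).mpr ((hGadj _ _).mpr ⟨hxy, hp⟩), rfl⟩
    have hinj2 : Set.InjOn F G.edgeSet := by
      intro e₁ h₁ e₂ h₂ he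
      induction e₁ with
      | _ a b =>
        induction e₂ with
        | _ x y =>
          rw [SimpleGraph.mem_edgeSet, hGadj] at h₁ h₂
          have : ({a, b} : Finset (Fin n)) = {x, y} := he
          exact Sym2.eq_iff.mpr (pair_eq_pair_iff'.mp this)
    rw [← Set.ncard_coe_finset, ← himg, Set.ncard_image_of_injOn hinj2]
  have hPB : P.card = B.card := by
    rw [← him, Finset.card_image_of_injOn hinj]
  -- triangles
  have htri : R.card ≤ (G.cliqueSet 3).ncard := by
    have hsub : ↑R ⊆ G.cliqueSet 3 := by
      intro r hr
      rw [Finset.mem_coe] at hr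
      rw [SimpleGraph.mem_cliqueSet_iff, SimpleGraph.isNClique_iff]
      refine ⟨?_, h3 r (hBR ▸ Finset.mem_union_right _ hr)⟩
      intro x hx y hy hxy
      exact (hGadj _ _).mpr ⟨hxy, hred r hr x hx y hy hxy⟩
    calc R.card = (↑R : Set (Finset (Fin n))).ncard := (Set.ncard_coe_finset R).symm
      _ ≤ _ := Set.ncard_le_ncard hsub (Set.toFinite _)
  have hHcard : H.card = B.card + R.card := by
    rw [← hBR, Finset.card_union_of_disjoint hdis]
  have h1 : B.card ≤ exCycle n ℓ := by
    rw [exCycle]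
    exact le_csSup bddE ⟨G, hCF, by rw [hedge, hPB]⟩
  have h2 : R.card ≤ triMax n ℓ := by
    rw [triMax]
    exact le_trans htri (le_csSup bddT ⟨G, hCF, rfl⟩)
  omega
end
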